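/- For every integer N ≥ 2, the function x ↦ sin(x/2)/(N·sin(x/(2N))) is strictly decreasing on the interval (0, 2π]; it is strictly positive on (0, 2π), strictly less than 1 there, and equals 0 at x = 2π. (This is the strict monotonicity of the absolute Dirichlet kernel on its main lobe.) -/

import Mathlib

open Real

/-- Dirichlet kernel `D_N(x) = sin(x/2) / (N · sin(x/(2N)))`. -/
noncomputable def dirichlet (N : ℕ) (x : ℝ) : ℝ :=
  Real.sin (x / 2) / ((N : ℝ) * Real.sin (x / (2 * N)))

private lemma key_ineq : ∀ n : ℕ, 2 ≤ n → ∀ t : ℝ, 0 < t → (n : ℝ) * t < π →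
    (n : ℝ) * Real.cos (n * t) * Real.sin t < Real.sin (n * t) * Real.cos t := by
  intro n hn
  induction n, hn using Nat.le_induction with
  | base =>
    intro t ht hlt
    push_cast at hlt ⊢
    have htpi : t < π / 2 := by linarith
    have hs : 0 < Real.sin t := Real.sin_pos_of_pos_of_lt_pi ht (by nlinarith [Real.pi_pos])
    have hc : 0 < Real.cos t := Real.cos_pos_of_mem_Ioo ⟨by linarith, htpi⟩
    rw [Real.sin_two_mul, Real.cos_two_mul]
    nlinarith [Real.sin_sq_add_cos_sq t, mul_pos hs hs]
  | succ n hn ih =>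
    intro t ht hlt
    have hn2 : (2 : ℝ) ≤ (n : ℝ) := by exact_mod_cast hn
    push_cast at hlt ⊢
    have hnt : (n : ℝ) * t < π := by nlinarith
    have ih' := ih t ht (by exact_mod_cast hnt)
    have hs : 0 < Real.sin t := Real.sin_pos_of_pos_of_lt_pi ht (by nlinarith [Real.pi_pos])
    have hc : 0 < Real.cos t := Real.cos_pos_of_mem_Ioo ⟨by nlinarith [Real.pi_pos], by nlinarith⟩
    have hsn : 0 < Real.sin ((n : ℝ) * t) :=
      Real.sin_pos_of_pos_of_lt_pi (by positivity) hnt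
    rw [show ((n : ℝ) + 1) * t = (n : ℝ) * t + t by ring, Real.sin_add, Real.cos_add]
    nlinarith [mul_lt_mul_of_pos_right ih' hc, mul_pos hsn (mul_pos hs hs)]

private lemma sin_mul_lt : ∀ n : ℕ, 2 ≤ n → ∀ t : ℝ, 0 < t → (n : ℝ) * t < π →
    Real.sin ((n : ℝ) * t) < (n : ℝ) * Real.sin t := by
  intro n hn
  induction n, hn using Nat.le_induction with
  | base =>
    intro t ht hlt
    push_cast at hlt ⊢
    have hs : 0 < Real.sin t := Real.sin_pos_of_pos_of_lt_pi ht (by nlinarith [Real.pi_pos])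
    have hc : 0 < Real.cos t := Real.cos_pos_of_mem_Ioo ⟨by linarith, by linarith⟩
    have hc1 : Real.cos t < 1 := by
      nlinarith [Real.sin_sq_add_cos_sq t, mul_pos hs hs]
    rw [Real.sin_two_mul]
    nlinarith
  | succ n hn ih =>
    intro t ht hlt
    have hn2 : (2 : ℝ) ≤ (n : ℝ) := by exact_mod_cast hn
    push_cast at hlt ⊢
    have hnt : (n : ℝ) * t < π := by nlinarith
    have ih' := ih t ht (by exact_mod_cast hnt)
    have hs : 0 < Real.sin t := Real.sin_pos_of_pos_of_lt_pi ht (by nlinarith [Real.pi_pos])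
    have hsn : 0 < Real.sin ((n : ℝ) * t) :=
      Real.sin_pos_of_pos_of_lt_pi (by positivity) hnt
    rw [show ((n : ℝ) + 1) * t = (n : ℝ) * t + t by ring, Real.sin_add]
    nlinarith [Real.cos_le_one t, Real.cos_le_one ((n : ℝ) * t),
      mul_le_of_le_one_right hs.le (Real.cos_le_one ((n : ℝ) * t))]

/-- for every `N ≥ 2`, `x ↦ sin(x/2)/(N·sin(x/(2N)))` is strictly decreasing
on `(0, 2π]`; it is strictly positive and strictly less than `1` on `(0, 2π)`, and
vanishes at `x = 2π`. -/
theorem dirichlet_main_lobe (N : ℕ) (hN : 2 ≤ N) :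
    StrictAntiOn (dirichlet N) (Set.Ioc 0 (2 * π)) ∧
    (∀ x ∈ Set.Ioo (0 : ℝ) (2 * π), 0 < dirichlet N x) ∧
    (∀ x ∈ Set.Ioo (0 : ℝ) (2 * π), dirichlet N x < 1) ∧
    dirichlet N (2 * π) = 0 := by
  have hN0 : (0 : ℝ) < (N : ℝ) := by exact_mod_cast Nat.lt_of_lt_of_le (by norm_num) hN
  have hN2 : (2 : ℝ) ≤ (N : ℝ) := by exact_mod_cast hN
  have hpi := Real.pi_pos
  -- denominator positive on (0, 2π]
  have hden : ∀ x ∈ Set.Ioc (0 : ℝ) (2 * π), 0 < (N : ℝ) * Real.sin (x / (2 * N)) := by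
    intro x hx
    have ht : 0 < x / (2 * N) := div_pos hx.1 (by positivity)
    have ht2 : x / (2 * N) < π := by
      rw [div_lt_iff₀ (by positivity)]
      nlinarith [hx.2]
    exact mul_pos hN0 (Real.sin_pos_of_pos_of_lt_pi ht ht2)
  refine ⟨?_, ?_, ?_, ?_⟩
  · apply strictAntiOn_of_deriv_neg (convex_Ioc _ _)
    · apply ContinuousOn.div
      · exact (Real.continuous_sin.comp (continuous_id.div_const 2)).continuousOn
      · exact (continuous_const.mul
          (Real.continuous_sin.comp (continuous_id.div_const (2 * (N:ℝ))))).continuousOn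
      · intro x hx
        exact ne_of_gt (hden x hx)
    · rw [interior_Ioc]
      intro x hx
      have hd0 : (N : ℝ) * Real.sin (x / (2 * N)) ≠ 0 :=
        ne_of_gt (hden x ⟨hx.1, le_of_lt hx.2⟩)
      have h1 : HasDerivAt (fun y : ℝ => Real.sin (y / 2)) (Real.cos (x / 2) * (1 / 2)) x :=
        by have := (Real.hasDerivAt_sin (x / 2)).comp x ((hasDerivAt_id x).div_const 2); exact this
      have h2 : HasDerivAt (fun y : ℝ => (N : ℝ) * Real.sin (y / (2 * N)))
          ((Real.cos (x / (2 * N)) * (1 / (2 * N))) * N) x :=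
        by have := (((Real.hasDerivAt_sin (x / (2 * N))).comp x
          ((hasDerivAt_id x).div_const (2 * (N:ℝ))))).const_mul (N : ℝ); exact this.congr_deriv (by ring)
      have hd : HasDerivAt (dirichlet N)
          ((Real.cos (x / 2) * (1 / 2) * ((N : ℝ) * Real.sin (x / (2 * N))) -
            Real.sin (x / 2) * ((Real.cos (x / (2 * N)) * (1 / (2 * N))) * N)) /
            ((N : ℝ) * Real.sin (x / (2 * N))) ^ 2) x := by
        unfold dirichlet
        exact h1.div h2 hd0
      rw [hd.deriv]
      apply div_neg_of_neg_of_pos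
      · have ht : 0 < x / (2 * N) := div_pos hx.1 (by positivity)
        have hxt : x / 2 = (N : ℝ) * (x / (2 * N)) := by field_simp
        have hNt : (N : ℝ) * (x / (2 * N)) < π := by rw [← hxt]; linarith [hx.2]
        have hkey := key_ineq N hN (x / (2 * N)) ht hNt
        rw [hxt]
        have hsimp : (Real.cos (x / (2 * N)) * (1 / (2 * N))) * N = Real.cos (x / (2 * N)) / 2 := by
          field_simp
        rw [hsimp]
        nlinarith [hkey]
      · positivity
  · intro x hx
    have hnum : 0 < Real.sin (x / 2) :=
      Real.sin_pos_of_pos_of_lt_pi (by linarith [hx.1]) (by linarith [hx.2])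
    exact div_pos hnum (hden x ⟨hx.1, le_of_lt hx.2⟩)
  · intro x hx
    rw [dirichlet, div_lt_one (hden x ⟨hx.1, le_of_lt hx.2⟩)]
    have ht : 0 < x / (2 * N) := div_pos hx.1 (by positivity)
    have hxt : x / 2 = (N : ℝ) * (x / (2 * N)) := by field_simp
    have hNt : (N : ℝ) * (x / (2 * N)) < π := by rw [← hxt]; linarith [hx.2]
    rw [hxt]
    exact sin_mul_lt N hN (x / (2 * N)) ht hNt
  · rw [dirichlet, show 2 * π / 2 = π by ring, Real.sin_pi, zero_div]
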